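/- There exist ε > 0, R₀ > 1/ε¹⁰ and a constant C > 0 (depending only on a, b, ε) such that for all R > R₀: for every w ∈ K⁺ and every n ≥ 1, Mₙ ≤ C · max{Mₙ₋₁^{3/2}, |xₙ₋₁|³}. -/

import Mathlib

open Complex Filter Topology

/-- The quadratic automorphism `H(x,y,z) = (xy + az, x² + by, x)` of `ℂ³`. -/
noncomputable def H (a b : ℂ) (w : ℂ × ℂ × ℂ) : ℂ × ℂ × ℂ :=
  (w.1 * w.2.1 + a * w.2.2, w.1 ^ 2 + b * w.2.1, w.1)

/-- `V⁻ = {(x,y,z) : |xy| > max{R, 2|az|, |x|^{3/2}, (1/ε)|y|^{3/2}}}`. -/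
noncomputable def Vminus (a : ℂ) (ε R : ℝ) : Set (ℂ × ℂ × ℂ) :=
  {w | ‖(w.1 * w.2.1)‖ >
    max R (max (2 * ‖(a * w.2.2)‖)
      (max ((‖w.1‖) ^ ((3 : ℝ) / 2))
        ((1 / ε) * (‖w.2.1‖) ^ ((3 : ℝ) / 2))))}

/-- `U⁺ = ⋃_{n≥0} H⁻ⁿ(V⁻)`, i.e. the points whose forward orbit meets `V⁻`. -/
noncomputable def Uplus (a b : ℂ) (ε R : ℝ) : Set (ℂ × ℂ × ℂ) :=
  ⋃ n : ℕ, (H a b)^[n] ⁻¹' Vminus a ε R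

/-- `K⁺ = ℂ³ \ U⁺`. -/
noncomputable def Kplus (a b : ℂ) (ε R : ℝ) : Set (ℂ × ℂ × ℂ) :=
  (Uplus a b ε R)ᶜ

/-- `Mₙ = max{R, 2|azₙ|, |xₙ|^{3/2}, (1/ε)|yₙ|^{3/2}}` where `Hⁿ(w) = (xₙ,yₙ,zₙ)`. -/
noncomputable def Mseq (a b : ℂ) (ε R : ℝ) (w : ℂ × ℂ × ℂ) (n : ℕ) : ℝ :=
  max R (max (2 * ‖(a * ((H a b)^[n] w).2.2)‖)
    (max ((‖((H a b)^[n] w).1‖) ^ ((3 : ℝ) / 2))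
      ((1 / ε) * (‖((H a b)^[n] w).2.1‖) ^ ((3 : ℝ) / 2))))

set_option maxHeartbeats 1000000 in
/-- there exist `ε > 0`, `R₀ > 1/ε¹⁰` and a constant `C > 0`
(depending only on `a, b, ε`) such that for all `R > R₀`: for every `w ∈ K⁺`
and every `n ≥ 1`, `Mₙ ≤ C · max{Mₙ₋₁^{3/2}, |xₙ₋₁|³}`. -/
theorem stmt12 (a b : ℂ) (ha : a ≠ 0) (hb : b ≠ 0) :
    ∃ ε > (0 : ℝ), ∃ R₀ > 1 / ε ^ 10, ∃ C > (0 : ℝ), ∀ R > R₀,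
      ∀ w ∈ Kplus a b ε R, ∀ n : ℕ,
        Mseq a b ε R w (n + 1) ≤
          C * max ((Mseq a b ε R w n) ^ ((3 : ℝ) / 2))
            ((‖(((H a b)^[n] w).1)‖) ^ 3) := by
  set B : ℝ := max 1 (‖b‖) with hB
  have hB1 : (1 : ℝ) ≤ B := le_max_left _ _
  have hB0 : (0 : ℝ) ≤ B := le_trans zero_le_one hB1
  refine ⟨1, one_pos, 2, by norm_num, 4 * (1 + ‖a‖ + B ^ 2), by positivity, ?_⟩
  intro R hR w hw n
  set p := (H a b)^[n] w with hp
  set M := Mseq a b 1 R w n with hM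
  have hKw : ‖(p.1 * p.2.1)‖ ≤ M := by
    simp only [Kplus, Uplus, Set.mem_compl_iff, Set.mem_iUnion, not_exists,
      Set.mem_preimage] at hw
    have h := hw n
    simp only [Vminus, Set.mem_setOf_eq, not_lt] at h
    simpa [Mseq, hM, hp] using h
  have hRM : R ≤ M := le_max_left _ _
  have hM1 : (1 : ℝ) ≤ M := le_trans (by linarith) hRM
  have hM0 : (0 : ℝ) ≤ M := by linarith
  have hz : 2 * ‖(a * p.2.2)‖ ≤ M := le_trans (le_max_left _ _) (le_max_right _ _)
  have hx32 : (‖p.1‖) ^ ((3 : ℝ) / 2) ≤ M :=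
    le_trans (le_trans (le_max_left _ _) (le_max_right _ _)) (le_max_right _ _)
  have hy32 : (‖p.2.1‖) ^ ((3 : ℝ) / 2) ≤ M := by
    have h : (1 / 1 : ℝ) * (‖p.2.1‖) ^ ((3 : ℝ) / 2) ≤ M :=
      le_trans (le_max_right _ _) (le_trans (le_max_right _ _) (le_max_right _ _))
    linarith
  have hynn : (0:ℝ) ≤ (‖p.2.1‖) ^ ((3 : ℝ) / 2) :=
    Real.rpow_nonneg (norm_nonneg _) _
  set Mx : ℝ := max (M ^ ((3 : ℝ) / 2)) ((‖p.1‖) ^ 3) with hMx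
  have hM32 : M ≤ M ^ ((3 : ℝ) / 2) := by
    calc M = M ^ (1 : ℝ) := (Real.rpow_one M).symm
    _ ≤ M ^ ((3 : ℝ) / 2) := Real.rpow_le_rpow_of_exponent_le hM1 (by norm_num)
  have hMM : M ^ ((3 : ℝ) / 2) ≤ Mx := le_max_left _ _
  have hx3Mx : (‖p.1‖) ^ 3 ≤ Mx := le_max_right _ _
  have hMx1 : (1 : ℝ) ≤ Mx := le_trans (le_trans hM1 hM32) hMM
  have hMx0 : (0 : ℝ) ≤ Mx := by linarith
  have hMMx : M ≤ Mx := le_trans hM32 hMM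
  have hxM : ‖p.1‖ ≤ M := by
    have h1 : ((‖p.1‖) ^ ((3 : ℝ) / 2)) ^ ((2 : ℝ) / 3) = ‖p.1‖ := by
      rw [← Real.rpow_mul (norm_nonneg _)]
      norm_num
    calc ‖p.1‖ = ((‖p.1‖) ^ ((3 : ℝ) / 2)) ^ ((2 : ℝ) / 3) := h1.symm
    _ ≤ M ^ ((2 : ℝ) / 3) :=
      Real.rpow_le_rpow (Real.rpow_nonneg (norm_nonneg _) _) hx32 (by norm_num)
    _ ≤ M ^ (1 : ℝ) := Real.rpow_le_rpow_of_exponent_le hM1 (by norm_num)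
    _ = M := Real.rpow_one M
  have hC4 : (4 : ℝ) ≤ 4 * (1 + ‖a‖ + B ^ 2) := by
    nlinarith [norm_nonneg a]
  have hC4Mx : 4 * Mx ≤ 4 * (1 + ‖a‖ + B ^ 2) * Mx :=
    mul_le_mul_of_nonneg_right hC4 hMx0
  have h232 : (2:ℝ) ^ ((3:ℝ)/2) ≤ 4 := by
    calc (2:ℝ) ^ ((3:ℝ)/2) ≤ (2:ℝ) ^ (((2:ℕ):ℝ)) :=
      Real.rpow_le_rpow_of_exponent_le one_le_two (by norm_num)
    _ = (2:ℝ) ^ (2:ℕ) := Real.rpow_natCast 2 2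
    _ = 4 := by norm_num
  have hiter : (H a b)^[n + 1] w = H a b p := by rw [Function.iterate_succ_apply', hp]
  have hgoal : Mseq a b 1 R w (n + 1) =
      max R (max (2 * ‖(a * p.1)‖)
        (max ((‖(p.1 * p.2.1 + a * p.2.2)‖) ^ ((3 : ℝ) / 2))
          ((1 / 1) * (‖(p.1 ^ 2 + b * p.2.1)‖) ^ ((3 : ℝ) / 2)))) := by
    rw [Mseq, hiter]; rfl
  rw [hgoal]
  refine max_le ?_ (max_le ?_ (max_le ?_ ?_))
  · linarith
  · rw [norm_mul]
    have h2 : ‖a‖ * ‖p.1‖ ≤ ‖a‖ * Mx :=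
      mul_le_mul_of_nonneg_left (hxM.trans hMMx) (norm_nonneg _)
    nlinarith [hMx0, norm_nonneg a, sq_nonneg B]
  · have habs : ‖(p.1 * p.2.1 + a * p.2.2)‖ ≤ 2 * M := by
      calc ‖(p.1 * p.2.1 + a * p.2.2)‖
          ≤ ‖(p.1 * p.2.1)‖ + ‖(a * p.2.2)‖ := norm_add_le _ _
      _ ≤ 2 * M := by linarith
    have hMnn : (0:ℝ) ≤ M ^ ((3:ℝ)/2) := Real.rpow_nonneg hM0 _
    calc (‖(p.1 * p.2.1 + a * p.2.2)‖) ^ ((3:ℝ)/2)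
        ≤ (2 * M) ^ ((3:ℝ)/2) :=
          Real.rpow_le_rpow (norm_nonneg _) habs (by norm_num)
    _ = 2 ^ ((3:ℝ)/2) * M ^ ((3:ℝ)/2) := Real.mul_rpow (by norm_num) hM0
    _ ≤ 4 * M ^ ((3:ℝ)/2) := mul_le_mul_of_nonneg_right h232 hMnn
    _ ≤ 4 * Mx := by linarith
    _ ≤ 4 * (1 + ‖a‖ + B ^ 2) * Mx := hC4Mx
  · rw [show (1:ℝ)/1 = 1 by norm_num, one_mul]
    set u : ℝ := (‖p.1‖) ^ 2 with hu
    set v : ℝ := B * ‖p.2.1‖ with hv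
    have hun : (0:ℝ) ≤ u := sq_nonneg _
    have hvn : (0:ℝ) ≤ v := mul_nonneg hB0 (norm_nonneg _)
    have habs : ‖(p.1 ^ 2 + b * p.2.1)‖ ≤ 2 * max u v := by
      calc ‖(p.1 ^ 2 + b * p.2.1)‖
          ≤ ‖(p.1 ^ 2)‖ + ‖(b * p.2.1)‖ := norm_add_le _ _
      _ = u + ‖b‖ * ‖p.2.1‖ := by rw [norm_pow, norm_mul]
      _ ≤ u + v := by
          have : ‖b‖ * ‖p.2.1‖ ≤ v :=
            mul_le_mul_of_nonneg_right (le_max_right _ _) (norm_nonneg _)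
          linarith
      _ ≤ 2 * max u v := by
          have h1 : u ≤ max u v := le_max_left _ _
          have h2 : v ≤ max u v := le_max_right _ _
          linarith
    have hmaxn : (0:ℝ) ≤ max u v := le_trans hun (le_max_left _ _)
    have hu32 : u ^ ((3:ℝ)/2) = (‖p.1‖) ^ 3 := by
      rw [hu, ← Real.rpow_natCast (‖p.1‖) 2,
        ← Real.rpow_mul (norm_nonneg _),
        ← Real.rpow_natCast (‖p.1‖) 3]
      norm_num
    have hv32 : v ^ ((3:ℝ)/2) ≤ B ^ 2 * M := by
      have hB32 : B ^ ((3:ℝ)/2) ≤ B ^ 2 := by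
        calc B ^ ((3:ℝ)/2) ≤ B ^ (((2:ℕ):ℝ)) :=
          Real.rpow_le_rpow_of_exponent_le hB1 (by norm_num)
        _ = B ^ (2:ℕ) := Real.rpow_natCast B 2
      calc v ^ ((3:ℝ)/2) = B ^ ((3:ℝ)/2) * (‖p.2.1‖) ^ ((3:ℝ)/2) :=
          Real.mul_rpow hB0 (norm_nonneg _)
      _ ≤ B ^ 2 * M := by
          apply mul_le_mul hB32 hy32 hynn
          positivity
    have hmax32 : (max u v) ^ ((3:ℝ)/2) ≤ max (u ^ ((3:ℝ)/2)) (v ^ ((3:ℝ)/2)) := by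
      rcases max_choice u v with h | h <;> rw [h]
      · exact le_max_left _ _
      · exact le_max_right _ _
    have hfin : max (u ^ ((3:ℝ)/2)) (v ^ ((3:ℝ)/2)) ≤ B ^ 2 * Mx := by
      apply max_le
      · rw [hu32]
        calc (‖p.1‖) ^ 3 ≤ Mx := hx3Mx
        _ = 1 * Mx := (one_mul Mx).symm
        _ ≤ B ^ 2 * Mx := mul_le_mul_of_nonneg_right (by nlinarith) hMx0
      · calc v ^ ((3:ℝ)/2) ≤ B ^ 2 * M := hv32
        _ ≤ B ^ 2 * Mx := mul_le_mul_of_nonneg_left hMMx (by positivity)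
    calc (‖(p.1 ^ 2 + b * p.2.1)‖) ^ ((3:ℝ)/2)
        ≤ (2 * max u v) ^ ((3:ℝ)/2) :=
          Real.rpow_le_rpow (norm_nonneg _) habs (by norm_num)
    _ = 2 ^ ((3:ℝ)/2) * (max u v) ^ ((3:ℝ)/2) := Real.mul_rpow (by norm_num) hmaxn
    _ ≤ 4 * (B ^ 2 * Mx) := by
        have := Real.rpow_nonneg hmaxn ((3:ℝ)/2)
        nlinarith [le_trans hmax32 hfin]
    _ ≤ 4 * (1 + ‖a‖ + B ^ 2) * Mx := by nlinarith [norm_nonneg a]
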